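/- The Cesàro operator on C_l([0,∞]) is not mean ergodic: there exists f ∈ C_l([0,∞]) (e.g. f(x) = cos(x)/(x+1)) such that the Cesàro means C_{[n]}f = (1/n)Σ_{k=1}^n C^k f do not converge in C_l([0,∞]). -/

import Mathlib

open MeasureTheory

/-- The Cesàro average: `ces f x = (1/x) ∫₀ˣ f(t) dt` for `x ≠ 0`, `ces f 0 = f 0`. -/
noncomputable def ces (f : ℝ → ℂ) (x : ℝ) : ℂ :=
  if x = 0 then f 0 else (∫ t in (0:ℝ)..x, f t) / (x : ℂ)


lemma intInt_of_contOn {h : ℝ → ℂ} (hc : ContinuousOn h (Set.Ici 0)) {x : ℝ} (hx : 0 ≤ x) :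
    IntervalIntegrable h volume 0 x := by
  apply ContinuousOn.intervalIntegrable
  apply hc.mono
  rw [Set.uIcc_of_le hx]
  exact fun t ht => ht.1

lemma ces_zero (h : ℝ → ℂ) : ces h 0 = h 0 := by simp [ces]

lemma primitive_contOn {h : ℝ → ℂ} (hc : ContinuousOn h (Set.Ici 0)) :
    ContinuousOn (fun x => ∫ t in (0:ℝ)..x, h t) (Set.Ici 0) := by
  intro x hx
  have hx0 : (0:ℝ) ≤ x := hx
  have hmem : Set.Icc (0:ℝ) (x+1) ∈ nhdsWithin x (Set.Ici 0) := by
    rw [← Set.Ici_inter_Iic]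
    exact Filter.inter_mem self_mem_nhdsWithin
      (mem_nhdsWithin_of_mem_nhds (Iic_mem_nhds (by linarith)))
  have hint : IntegrableOn h (Set.uIcc (0:ℝ) (x+1)) volume := by
    rw [Set.uIcc_of_le (by linarith)]
    exact (hc.mono (fun t ht => ht.1)).integrableOn_Icc
  have := intervalIntegral.continuousOn_primitive_interval hint
  rw [Set.uIcc_of_le (by linarith : (0:ℝ) ≤ x+1)] at this
  exact (this x ⟨hx0, by linarith⟩).mono_of_mem_nhdsWithin hmem

lemma ces_contOn {h : ℝ → ℂ} (hc : ContinuousOn h (Set.Ici 0)) :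
    ContinuousOn (ces h) (Set.Ici 0) := by
  intro x hx
  rcases eq_or_lt_of_le (hx.out : (0:ℝ) ≤ x) with rfl | hx'
  · -- continuity at 0
    rw [ContinuousWithinAt, Metric.tendsto_nhdsWithin_nhds]
    intro ε hε
    have h0 := hc 0 Set.self_mem_Ici
    rw [ContinuousWithinAt, Metric.tendsto_nhdsWithin_nhds] at h0
    obtain ⟨δ, hδ, hδ'⟩ := h0 (ε/2) (by linarith)
    refine ⟨δ, hδ, fun {y} hy hyd => ?_⟩
    rcases eq_or_lt_of_le (hy.out : (0:ℝ) ≤ y) with rfl | hy'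
    · simpa using hε
    · rw [ces, if_neg (ne_of_gt hy')]
      have hconst : (∫ t in (0:ℝ)..y, (h 0 : ℂ)) = (y:ℂ) * h 0 := by
        rw [intervalIntegral.integral_const]
        simp [Complex.real_smul]
      have hsub : (∫ t in (0:ℝ)..y, h t) / (y:ℂ) - ces h 0
          = (∫ t in (0:ℝ)..y, (h t - h 0)) / (y:ℂ) := by
        have hy0 : (y:ℂ) ≠ 0 := by exact_mod_cast ne_of_gt hy'
        rw [ces_zero, intervalIntegral.integral_sub (intInt_of_contOn hc hy'.le)
          intervalIntegrable_const, hconst, sub_div, mul_div_cancel_left₀ _ hy0]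
      rw [dist_eq_norm, hsub, norm_div]
      have hb : ‖∫ t in (0:ℝ)..y, (h t - h 0)‖ ≤ (ε/2) * |y - 0| := by
        apply intervalIntegral.norm_integral_le_of_norm_le_const
        intro t ht
        rw [Set.uIoc_of_le hy'.le] at ht
        have := hδ' (Set.mem_Ici.mpr ht.1.le) (by
          rw [Real.dist_eq]
          rw [Real.dist_eq] at hyd
          have : |t| ≤ |y| := by
            rw [abs_of_pos ht.1, abs_of_pos hy']; exact ht.2
          calc |t - 0| = |t| := by ring_nf
            _ ≤ |y| := this
            _ = |y - 0| := by ring_nf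
            _ < δ := hyd)
        rw [dist_eq_norm] at this
        exact this.le
      have hy2 : ‖(y:ℂ)‖ = y := by simp [abs_of_pos hy']
      rw [hy2]
      calc ‖∫ t in (0:ℝ)..y, (h t - h 0)‖ / y ≤ ((ε/2) * |y - 0|) / y := by
            exact div_le_div_of_nonneg_right hb hy'.le
        _ = ε/2 := by rw [sub_zero, abs_of_pos hy']; field_simp
        _ < ε := by linarith
  · -- continuity at x > 0
    have hne : ∀ᶠ y in nhdsWithin x (Set.Ici 0), ces h y
        = (∫ t in (0:ℝ)..y, h t) / (y:ℂ) := by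
      filter_upwards [mem_nhdsWithin_of_mem_nhds (Ioi_mem_nhds hx')] with y hy
      rw [ces, if_neg (ne_of_gt hy)]
    apply ContinuousWithinAt.congr_of_eventuallyEq _ hne
      (by rw [ces, if_neg (ne_of_gt hx')])
    apply ContinuousWithinAt.div
    · exact primitive_contOn hc x hx
    · exact (Complex.continuous_ofReal.continuousAt).continuousWithinAt
    · exact_mod_cast ne_of_gt hx'



lemma intInt_of_contOn' {h : ℝ → ℂ} (hc : ContinuousOn h (Set.Ici 0)) {a b : ℝ}
    (ha : 0 ≤ a) (hab : a ≤ b) : IntervalIntegrable h volume a b := by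
  apply ContinuousOn.intervalIntegrable
  apply hc.mono
  rw [Set.uIcc_of_le hab]
  exact fun t ht => le_trans ha ht.1

lemma ces_tendsto_zero {h : ℝ → ℂ} (hc : ContinuousOn h (Set.Ici 0))
    (hb : ∀ x, 0 ≤ x → ‖h x‖ ≤ 1) (hlim : Filter.Tendsto h Filter.atTop (nhds 0)) :
    Filter.Tendsto (ces h) Filter.atTop (nhds 0) := by
  rw [Metric.tendsto_nhds]
  intro ε hε
  have := hlim.eventually (Metric.ball_mem_nhds (0:ℂ) (half_pos hε))
  rw [Filter.eventually_atTop] at this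
  obtain ⟨A₀, hA₀⟩ := this
  set A := max A₀ 0 with hA
  have hAnn : 0 ≤ A := le_max_right _ _
  have hAtail : ∀ t, A ≤ t → ‖h t‖ ≤ ε/2 := by
    intro t ht
    have := hA₀ t ((le_max_left _ _).trans ht)
    simpa [Metric.mem_ball, dist_eq_norm] using this.le
  rw [Filter.eventually_atTop]
  refine ⟨max (max A 1) ((4*A+1)/ε), fun x hx => ?_⟩
  have hxA : A ≤ x := le_trans (le_max_left A 1) (le_trans (le_max_left _ _) hx)
  have hx1 : (1:ℝ) ≤ x := le_trans (le_max_right A 1) (le_trans (le_max_left _ _) hx)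
  have hx0 : 0 < x := lt_of_lt_of_le one_pos hx1
  have hxε : (4*A+1)/ε ≤ x := le_trans (le_max_right _ _) hx
  rw [dist_eq_norm, sub_zero, ces, if_neg (ne_of_gt hx0), norm_div]
  have hxnorm : ‖(x:ℂ)‖ = x := by simp [abs_of_pos hx0]
  rw [hxnorm]
  have hsplit : (∫ t in (0:ℝ)..x, h t) = (∫ t in (0:ℝ)..A, h t) + ∫ t in A..x, h t :=
    (intervalIntegral.integral_add_adjacent_intervals (intInt_of_contOn hc hAnn)
      (intInt_of_contOn' hc hAnn hxA)).symm
  have h1 : ‖∫ t in (0:ℝ)..A, h t‖ ≤ 1 * |A - 0| := by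
    apply intervalIntegral.norm_integral_le_of_norm_le_const
    intro t ht
    rw [Set.uIoc_of_le hAnn] at ht
    exact hb t ht.1.le
  have h2 : ‖∫ t in A..x, h t‖ ≤ (ε/2) * |x - A| := by
    apply intervalIntegral.norm_integral_le_of_norm_le_const
    intro t ht
    rw [Set.uIoc_of_le hxA] at ht
    exact hAtail t ht.1.le
  have hnum : ‖∫ t in (0:ℝ)..x, h t‖ ≤ A + (ε/2) * x := by
    rw [hsplit]
    calc ‖(∫ t in (0:ℝ)..A, h t) + ∫ t in A..x, h t‖
        ≤ ‖∫ t in (0:ℝ)..A, h t‖ + ‖∫ t in A..x, h t‖ := norm_add_le _ _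
      _ ≤ 1 * |A - 0| + (ε/2) * |x - A| := add_le_add h1 h2
      _ ≤ A + (ε/2) * x := by
          rw [sub_zero, abs_of_nonneg hAnn, abs_of_nonneg (by linarith)]
          nlinarith
  calc ‖∫ t in (0:ℝ)..x, h t‖ / x ≤ (A + (ε/2) * x) / x :=
        div_le_div_of_nonneg_right hnum hx0.le
    _ = A / x + ε/2 := by rw [add_div, mul_div_assoc, div_self (ne_of_gt hx0), mul_one]
    _ < ε := by
        have : A / x ≤ ε/4 := by
          rw [div_le_iff₀ hx0]
          have hεx : 4*A + 1 ≤ ε * x := by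
            rw [div_le_iff₀ hε] at hxε
            linarith [mul_comm x ε]
          nlinarith
        linarith


lemma const_of_fixed {g : ℝ → ℂ} (hgc : ContinuousOn g (Set.Ici 0))
    (hfix : ∀ x : ℝ, 0 < x → (∫ t in (0:ℝ)..x, g t) = (x:ℂ) * g x) :
    ∀ x : ℝ, 0 < x → g x = g 1 := by
  set φ : ℝ → ℂ := fun x => ∫ t in (0:ℝ)..x, g t with hφ
  have hD : ∀ x ∈ Set.Ioi (0:ℝ), HasDerivAt (fun y : ℝ => φ y / (y:ℂ)) 0 x := by
    intro x hx
    have hx' : (0:ℝ) < x := hx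
    have hφD : HasDerivAt φ (g x) x := by
      apply intervalIntegral.integral_hasDerivAt_right (intInt_of_contOn hgc hx'.le)
      · exact (hgc.mono (fun t (ht : t ∈ Set.Ioi (0:ℝ)) => ht.out.le)).stronglyMeasurableAtFilter
          isOpen_Ioi x hx
      · exact (hgc.mono (fun t (ht : t ∈ Set.Ioi (0:ℝ)) => ht.out.le)).continuousAt
          (isOpen_Ioi.mem_nhds hx)
    have hden : HasDerivAt (fun y : ℝ => (y:ℂ)) 1 x := by
      simpa using (hasDerivAt_id x).ofReal_comp
    have hxne : (x:ℂ) ≠ 0 := by exact_mod_cast ne_of_gt hx'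
    have := hφD.div hden hxne
    refine this.congr_deriv ?_
    have hx2 : φ x = (x:ℂ) * g x := hfix x hx'
    rw [hx2]
    field_simp
    ring
  have hgq : ∀ x ∈ Set.Ioi (0:ℝ), g x = φ x / (x:ℂ) := by
    intro x hx
    have hxne : (x:ℂ) ≠ 0 := by exact_mod_cast ne_of_gt (hx.out)
    have hx2 : φ x = (x:ℂ) * g x := hfix x hx.out
    rw [hx2, mul_comm, mul_div_assoc, div_self hxne, mul_one]
  have hconst : ∀ x ∈ Set.Ioi (0:ℝ), φ x / (x:ℂ) = φ 1 / (1:ℂ) := by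
    intro x hx
    exact (convex_Ioi (0:ℝ)).is_const_of_fderivWithin_eq_zero
      (fun y hy => ((hD y hy).differentiableAt).differentiableWithinAt)
      (fun y hy => by
        rw [fderivWithin_of_isOpen isOpen_Ioi hy, (hD y hy).hasFDerivAt.fderiv]
        ext t
        simp)
      hx (by norm_num : (1:ℝ) ∈ Set.Ioi (0:ℝ))
  intro x hx
  rw [hgq x hx, hgq 1 (by norm_num), hconst x hx]
  norm_num

noncomputable def f₀ : ℝ → ℂ := fun x => ((x:ℂ) + 1)⁻¹

lemma f₀_ne (x : ℝ) (hx : 0 ≤ x) : ((x:ℂ) + 1) ≠ 0 := by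
  intro h
  have := congrArg Complex.re h
  simp at this
  linarith

lemma f₀_cont : ContinuousOn f₀ (Set.Ici 0) := by
  apply ContinuousOn.inv₀
  · exact (Complex.continuous_ofReal.add continuous_const).continuousOn
  · exact fun x hx => f₀_ne x hx

lemma f₀_norm (x : ℝ) (hx : 0 ≤ x) : ‖f₀ x‖ = (x + 1)⁻¹ := by
  rw [f₀, norm_inv]
  congr 1
  have : ((x:ℂ) + 1) = ((x + 1 : ℝ) : ℂ) := by push_cast; ring
  rw [this, Complex.norm_real, Real.norm_eq_abs, abs_of_pos (by linarith)]

lemma f₀_bound (x : ℝ) (hx : 0 ≤ x) : ‖f₀ x‖ ≤ 1 := by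
  rw [f₀_norm x hx]
  rw [inv_le_one_iff₀]
  right; linarith

lemma f₀_lim : Filter.Tendsto f₀ Filter.atTop (nhds 0) := by
  rw [tendsto_zero_iff_norm_tendsto_zero]
  apply Filter.Tendsto.congr' (f₁ := fun x => (x+1)⁻¹)
  · filter_upwards [Filter.eventually_ge_atTop (0:ℝ)] with x hx
    exact (f₀_norm x hx).symm
  · exact Filter.Tendsto.inv_tendsto_atTop (Filter.tendsto_atTop_add_const_right _ 1 Filter.tendsto_id)

lemma f₀_at_zero : f₀ 0 = 1 := by simp [f₀]

lemma ces_norm_le {h : ℝ → ℂ} (hc : ContinuousOn h (Set.Ici 0))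
    (hb : ∀ x, 0 ≤ x → ‖h x‖ ≤ 1) {x : ℝ} (hx : 0 ≤ x) : ‖ces h x‖ ≤ 1 := by
  rcases eq_or_lt_of_le hx with rfl | hx'
  · simpa [ces] using hb 0 le_rfl
  · rw [ces, if_neg (ne_of_gt hx')]
    rw [norm_div]
    have hnorm : ‖∫ t in (0:ℝ)..x, h t‖ ≤ 1 * |x - 0| := by
      apply intervalIntegral.norm_integral_le_of_norm_le_const
      intro t ht
      rw [Set.uIoc_of_le hx] at ht
      exact hb t ht.1.le
    have hxn : ‖(x:ℂ)‖ = x := by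
      simp [Complex.norm_real, abs_of_pos hx']
    rw [hxn]
    rw [div_le_one hx']
    simpa [abs_of_pos hx'] using hnorm

/-- Bundle of properties preserved by `ces`. -/
def Good (h : ℝ → ℂ) : Prop :=
  ContinuousOn h (Set.Ici 0) ∧ (∀ x, 0 ≤ x → ‖h x‖ ≤ 1) ∧
    Filter.Tendsto h Filter.atTop (nhds 0)

lemma good_ces {h : ℝ → ℂ} (hg : Good h) : Good (ces h) :=
  ⟨ces_contOn hg.1, fun x hx => ces_norm_le hg.1 hg.2.1 hx,
    ces_tendsto_zero hg.1 hg.2.1 hg.2.2⟩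

lemma good_f₀ : Good f₀ := ⟨f₀_cont, f₀_bound, f₀_lim⟩

lemma good_iter (k : ℕ) : Good (ces^[k] f₀) := by
  induction k with
  | zero => exact good_f₀
  | succ n ih => rw [Function.iterate_succ_apply']; exact good_ces ih

lemma iter_at_zero (k : ℕ) : (ces^[k] f₀) 0 = 1 := by
  induction k with
  | zero => exact f₀_at_zero
  | succ n ih => rw [Function.iterate_succ_apply', ces_zero]; exact ih

lemma iter_integral {k : ℕ} {x : ℝ} (hx : 0 < x) :
    (∫ t in (0:ℝ)..x, (ces^[k] f₀) t) = (x:ℂ) * (ces^[k+1] f₀) x := by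
  rw [Function.iterate_succ_apply', ces, if_neg (ne_of_gt hx)]
  have hxne : (x:ℂ) ≠ 0 := by exact_mod_cast ne_of_gt hx
  field_simp

lemma sum_shift (a : ℕ → ℂ) (n : ℕ) :
    ∑ k ∈ Finset.Icc 1 n, a (k+1) = (∑ k ∈ Finset.Icc 1 n, a k) + a (n+1) - a 1 := by
  induction n with
  | zero => simp
  | succ m ih =>
      rw [Finset.sum_Icc_succ_top (by omega : 1 ≤ m + 1),
          Finset.sum_Icc_succ_top (by omega : 1 ≤ m + 1), ih]
      ring
section AnLemmas

noncomputable def An (n : ℕ) : ℝ → ℂ :=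
  fun x => (n : ℂ)⁻¹ • ∑ k ∈ Finset.Icc 1 n, (ces^[k] f₀) x

lemma An_contOn (n : ℕ) : ContinuousOn (An n) (Set.Ici 0) := by
  refine ContinuousOn.const_smul (g := fun x => ∑ k ∈ Finset.Icc 1 n, (ces^[k] f₀) x) ?_ ((n:ℂ)⁻¹)
  exact continuousOn_finset_sum _ (fun k _ => (good_iter k).1)

lemma An_bound (n : ℕ) (x : ℝ) (hx : 0 ≤ x) : ‖An n x‖ ≤ 1 := by
  rcases Nat.eq_zero_or_pos n with rfl | hn
  · simp [An]
  · rw [An, norm_smul]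
    have h1 : ‖(n:ℂ)⁻¹‖ = (n:ℝ)⁻¹ := by
      rw [norm_inv]; congr 1; simp
    have h2 : ‖∑ k ∈ Finset.Icc 1 n, (ces^[k] f₀) x‖ ≤ (n:ℝ) := by
      calc ‖∑ k ∈ Finset.Icc 1 n, (ces^[k] f₀) x‖
          ≤ ∑ k ∈ Finset.Icc 1 n, ‖(ces^[k] f₀) x‖ := norm_sum_le _ _
        _ ≤ ∑ k ∈ Finset.Icc 1 n, 1 := Finset.sum_le_sum (fun k _ => (good_iter k).2.1 x hx)
        _ = (n:ℝ) := by simp [Nat.card_Icc]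
    rw [h1]
    calc (n:ℝ)⁻¹ * ‖∑ k ∈ Finset.Icc 1 n, (ces^[k] f₀) x‖ ≤ (n:ℝ)⁻¹ * (n:ℝ) := by
          apply mul_le_mul_of_nonneg_left h2 (by positivity)
      _ = 1 := inv_mul_cancel₀ (Nat.cast_ne_zero.mpr (by omega))

lemma An_lim (n : ℕ) : Filter.Tendsto (An n) Filter.atTop (nhds 0) := by
  have : Filter.Tendsto (fun x => ∑ k ∈ Finset.Icc 1 n, (ces^[k] f₀) x)
      Filter.atTop (nhds (∑ k ∈ Finset.Icc 1 n, (0:ℂ))) :=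
    tendsto_finset_sum _ (fun k _ => (good_iter k).2.2)
  rw [show An n = fun x => (n : ℂ)⁻¹ • ∑ k ∈ Finset.Icc 1 n, (ces^[k] f₀) x from rfl]
  simpa using this.const_smul ((n:ℂ)⁻¹)

lemma An_at_zero {n : ℕ} (hn : 1 ≤ n) : An n 0 = 1 := by
  have : ∀ k ∈ Finset.Icc 1 n, (ces^[k] f₀) 0 = 1 := fun k _ => iter_at_zero k
  rw [An, Finset.sum_congr rfl this, Finset.sum_const, Nat.card_Icc]
  simp only [nsmul_eq_mul, mul_one, smul_eq_mul]
  rw [Nat.add_sub_cancel]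
  exact inv_mul_cancel₀ (Nat.cast_ne_zero.mpr (by omega))

lemma An_integral {n : ℕ} (hn : 1 ≤ n) {x : ℝ} (hx : 0 < x) :
    (∫ t in (0:ℝ)..x, An n t) / (x:ℂ)
      = An n x + (n:ℂ)⁻¹ • ((ces^[n+1] f₀) x - ces f₀ x) := by
  have hint : ∀ k, IntervalIntegrable (fun t => (ces^[k] f₀) t) volume 0 x :=
    fun k => intInt_of_contOn (good_iter k).1 hx.le
  have h1 : (∫ t in (0:ℝ)..x, An n t)
      = (n:ℂ)⁻¹ • ∑ k ∈ Finset.Icc 1 n, ∫ t in (0:ℝ)..x, (ces^[k] f₀) t := by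
    simp only [An]
    rw [intervalIntegral.integral_smul]
    congr 1
    exact intervalIntegral.integral_finset_sum (fun k _ => hint k)
  have h2 : ∀ k ∈ Finset.Icc 1 n, (∫ t in (0:ℝ)..x, (ces^[k] f₀) t)
      = (x:ℂ) * (ces^[k+1] f₀) x := fun k _ => iter_integral hx
  rw [h1, Finset.sum_congr rfl h2, ← Finset.mul_sum,
    sum_shift (fun k => (ces^[k] f₀) x) n]
  have hxne : (x:ℂ) ≠ 0 := by exact_mod_cast ne_of_gt hx
  have h3 : (ces^[1] f₀) x = ces f₀ x := by rw [Function.iterate_one]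
  rw [h3]
  simp only [An, smul_eq_mul]
  rw [div_eq_iff hxne]
  ring

end AnLemmas

/-- The Cesàro operator is not mean ergodic on `C_l([0,∞])`: there is `f ∈ C_l([0,∞])`
whose Cesàro means `(1/n) ∑_{k=1}^n C^k f` do not converge uniformly on `[0,∞)` to any
element of `C_l([0,∞])`. -/
theorem cesaro_Cl_not_mean_ergodic :
    ∃ f : ℝ → ℂ, ContinuousOn f (Set.Ici 0) ∧
      (∃ L : ℂ, Filter.Tendsto f Filter.atTop (nhds L)) ∧
      ¬ ∃ g : ℝ → ℂ, ContinuousOn g (Set.Ici 0) ∧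
        (∃ M : ℂ, Filter.Tendsto g Filter.atTop (nhds M)) ∧
        TendstoUniformlyOn
          (fun (n : ℕ) (x : ℝ) => (n : ℂ)⁻¹ • ∑ k ∈ Finset.Icc 1 n, (ces^[k] f) x)
          g Filter.atTop (Set.Ici 0) := by
  refine ⟨f₀, f₀_cont, ⟨0, f₀_lim⟩, ?_⟩
  rintro ⟨g, hgc, ⟨M, hgM⟩, hunif⟩
  have hunif' : TendstoUniformlyOn (fun n => An n) g Filter.atTop (Set.Ici 0) := hunif
  have hpt : ∀ x ∈ Set.Ici (0:ℝ),
      Filter.Tendsto (fun n => An n x) Filter.atTop (nhds (g x)) :=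
    fun x hx => hunif'.tendsto_at hx
  -- g 0 = 1
  have hg0 : g 0 = 1 := by
    have h1 : (fun n : ℕ => An n 0) =ᶠ[Filter.atTop] (fun _ => (1:ℂ)) := by
      filter_upwards [Filter.eventually_ge_atTop 1] with n hn
      exact An_at_zero hn
    exact tendsto_nhds_unique ((hpt 0 Set.self_mem_Ici).congr' h1) tendsto_const_nhds
  -- fixed point identity
  have hfix : ∀ x : ℝ, 0 < x → (∫ t in (0:ℝ)..x, g t) = (x:ℂ) * g x := by
    intro x hx
    have hxne : (x:ℂ) ≠ 0 := by exact_mod_cast ne_of_gt hx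
    have hsub : Set.uIoc (0:ℝ) x ⊆ Set.Ici 0 := by
      rw [Set.uIoc_of_le hx.le]
      exact fun t ht => ht.1.le
    have hDCT : Filter.Tendsto (fun n => ∫ t in (0:ℝ)..x, An n t) Filter.atTop
        (nhds (∫ t in (0:ℝ)..x, g t)) := by
      apply intervalIntegral.tendsto_integral_filter_of_dominated_convergence
        (bound := fun _ => (1:ℝ))
      · exact Filter.Eventually.of_forall (fun n =>
          ((An_contOn n).mono hsub).aestronglyMeasurable measurableSet_uIoc)
      · apply Filter.Eventually.of_forall
        intro n
        exact ae_of_all _ (fun t ht => An_bound n t (hsub ht).out)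
      · exact intervalIntegrable_const
      · exact ae_of_all _ (fun t ht => hpt t (hsub ht))
    have hdiv : Filter.Tendsto (fun n => (∫ t in (0:ℝ)..x, An n t) / (x:ℂ)) Filter.atTop
        (nhds ((∫ t in (0:ℝ)..x, g t) / (x:ℂ))) := hDCT.div_const _
    have hcor : Filter.Tendsto
        (fun n : ℕ => (n:ℂ)⁻¹ • ((ces^[n+1] f₀) x - ces f₀ x)) Filter.atTop (nhds 0) := by
      rw [tendsto_zero_iff_norm_tendsto_zero]
      apply squeeze_zero (fun n => norm_nonneg _) (g := fun n : ℕ => (n:ℝ)⁻¹ * 2)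
      · intro n
        rw [norm_smul]
        apply mul_le_mul ?_ ?_ (norm_nonneg _) (by positivity)
        · rw [norm_inv]
          simp
        · calc ‖(ces^[n+1] f₀) x - ces f₀ x‖
              ≤ ‖(ces^[n+1] f₀) x‖ + ‖ces f₀ x‖ := norm_sub_le _ _
            _ ≤ 1 + 1 := add_le_add ((good_iter (n+1)).2.1 x hx.le)
                ((good_ces good_f₀).2.1 x hx.le)
            _ = 2 := by norm_num
      · simpa using (tendsto_inv_atTop_nhds_zero_nat (𝕜 := ℝ)).mul_const (2:ℝ)
    have hRHS : Filter.Tendsto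
        (fun n : ℕ => An n x + (n:ℂ)⁻¹ • ((ces^[n+1] f₀) x - ces f₀ x)) Filter.atTop
        (nhds (g x)) := by
      simpa using (hpt x hx.le).add hcor
    have heq : (fun n : ℕ => (∫ t in (0:ℝ)..x, An n t) / (x:ℂ)) =ᶠ[Filter.atTop]
        (fun n : ℕ => An n x + (n:ℂ)⁻¹ • ((ces^[n+1] f₀) x - ces f₀ x)) := by
      filter_upwards [Filter.eventually_ge_atTop 1] with n hn
      exact An_integral hn hx
    have hkey := tendsto_nhds_unique (hdiv.congr' heq) hRHS
    rw [div_eq_iff hxne] at hkey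
    rw [hkey, mul_comm]
  have hcst := const_of_fixed hgc hfix
  -- M = g 1
  have hM1 : M = g 1 := by
    have h1 : g =ᶠ[Filter.atTop] (fun _ => g 1) := by
      filter_upwards [Filter.eventually_gt_atTop (0:ℝ)] with x hx
      exact hcst x hx
    exact tendsto_nhds_unique (hgM.congr' h1) tendsto_const_nhds
  -- M = 0
  have hM0 : M = 0 := by
    rw [← norm_eq_zero]
    have hle : ∀ ε : ℝ, 0 < ε → ‖M‖ ≤ 0 + ε := by
      intro ε hε
      obtain ⟨N, hN⟩ := Filter.eventually_atTop.mp
        ((Metric.tendstoUniformlyOn_iff.mp hunif') ε hε)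
      set n := max N 1 with hn
      have hb : ∀ x ∈ Set.Ici (0:ℝ), dist (g x) (An n x) < ε := hN n (le_max_left _ _)
      have h3 : Filter.Tendsto (fun x => ‖g x - An n x‖) Filter.atTop
          (nhds ‖M - 0‖) := (hgM.sub (An_lim n)).norm
      have h4 : ∀ᶠ x in Filter.atTop, ‖g x - An n x‖ ≤ ε := by
        filter_upwards [Filter.eventually_ge_atTop (0:ℝ)] with x hx
        have := hb x hx
        rw [dist_eq_norm] at this
        exact this.le
      have := le_of_tendsto h3 h4
      simpa using this
    have := le_of_forall_pos_le_add hle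
    exact le_antisymm (by simpa using this) (norm_nonneg _)
  -- g 0 = g 1 by continuity
  have hg01 : g 0 = g 1 := by
    have hcw : ContinuousWithinAt g (Set.Ici 0) 0 := hgc 0 Set.self_mem_Ici
    have h1 : Filter.Tendsto g (nhdsWithin 0 (Set.Ioi 0)) (nhds (g 0)) :=
      hcw.tendsto.mono_left (nhdsWithin_mono 0 (fun t ht => Set.mem_Ici.mpr (le_of_lt ht)))
    have h2 : Filter.Tendsto g (nhdsWithin 0 (Set.Ioi 0)) (nhds (g 1)) := by
      apply Filter.Tendsto.congr' _ tendsto_const_nhds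
      filter_upwards [self_mem_nhdsWithin] with t ht
      exact (hcst t ht).symm
    exact tendsto_nhds_unique h1 h2
  have : (1:ℂ) = 0 := by rw [← hg0, hg01, ← hM1, hM0]
  exact one_ne_zero this
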